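/- arXiv:2508.08203 — 3 statements merged into one kernel-verified Lean document; each statement's English description precedes it below -/
import Mathlib

section
/- Let A = fromBlocks H₁ Eᴴ E H₂ be an (m+n)×(m+n) Hermitian complex matrix with largest eigenvalue λ₁, and let λ̃₁ be the largest eigenvalue of à = fromBlocks H₁ 0 0 H₂. Then λ₁ ≥ λ̃₁; moreover, if λ₁ > λ̃₁, then η₁ := the distance from λ̃₁ to the spectrum of the block not containing λ̃₁ satisfies (λ₁ − λ̃₁)·(λ₁ − λ̃₁ + η₁) ≤ ‖E‖², and consequently λ₁ − λ̃₁ ≤ 2‖E‖² / (η₁ + √(η₁² + 4‖E‖²)). -/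
open Matrix

set_option linter.unusedSectionVars false
set_option maxHeartbeats 1000000

/-- The spectral norm (largest singular value) of a complex matrix. -/
noncomputable def specNorm {p q : ℕ} (M : Matrix (Fin p) (Fin q) ℂ) : ℝ :=
  ‖LinearMap.toContinuousLinearMap (Matrix.toEuclideanLin M)‖

section Helpers

variable {ι : Type*} [Fintype ι] [DecidableEq ι]

noncomputable def nsq (w : ι → ℂ) : ℝ := ∑ i, ‖w i‖^2

lemma nsq_nonneg (w : ι → ℂ) : 0 ≤ nsq w :=
  Finset.sum_nonneg fun _ _ => sq_nonneg _

lemma star_dot_self (w : ι → ℂ) : star w ⬝ᵥ w = (nsq w : ℂ) := by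
  simp [dotProduct, nsq, Pi.star_apply, Complex.star_def,
    Complex.normSq_eq_norm_sq, ← Complex.normSq_eq_conj_mul_self]

lemma nsq_unitary_mulVec (U : Matrix.unitaryGroup ι ℂ) (x : ι → ℂ) :
    nsq ((U : Matrix ι ι ℂ) *ᵥ x) = nsq x := by
  have h : star ((U : Matrix ι ι ℂ) *ᵥ x) ⬝ᵥ ((U : Matrix ι ι ℂ) *ᵥ x) = star x ⬝ᵥ x := by
    rw [star_mulVec, dotProduct_mulVec, vecMul_vecMul]
    show star x ᵥ* (star (U : Matrix ι ι ℂ) * (U : Matrix ι ι ℂ)) ⬝ᵥ x = _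
    rw [UnitaryGroup.star_mul_self, vecMul_one]
  have := congrArg Complex.re ((star_dot_self _).symm.trans (h.trans (star_dot_self x)))
  simpa using this

lemma nsq_star_unitary_mulVec (U : Matrix.unitaryGroup ι ℂ) (x : ι → ℂ) :
    nsq (star (U : Matrix ι ι ℂ) *ᵥ x) = nsq x := by
  simpa using nsq_unitary_mulVec (star U) x

lemma nsq_diagonal_mulVec (d : ι → ℝ) (w : ι → ℂ) :
    nsq (Matrix.diagonal (fun i => (d i : ℂ)) *ᵥ w) = ∑ i, (d i)^2 * ‖w i‖^2 := by
  unfold nsq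
  congr 1
  ext i
  simp [mulVec_diagonal, mul_pow, abs_of_nonneg]

lemma conj_mul_self_norm (z : ℂ) : (starRingEnd ℂ) z * z = ((‖z‖^2 : ℝ) : ℂ) := by
  rw [← Complex.normSq_eq_conj_mul_self, Complex.normSq_eq_norm_sq]

lemma star_dot_diag (d : ι → ℝ) (w : ι → ℂ) :
    star w ⬝ᵥ (Matrix.diagonal (RCLike.ofReal ∘ d) *ᵥ w) = ((∑ i, d i * ‖w i‖^2 : ℝ) : ℂ) := by
  simp only [dotProduct, mulVec_diagonal, Pi.star_apply, Function.comp, Complex.star_def]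
  push_cast
  congr 1
  ext i
  rw [mul_left_comm, conj_mul_self_norm]
  push_cast
  norm_num [RCLike.ofReal]

/-- Quadratic form expansion in the eigenbasis. -/
lemma herm_quad {H : Matrix ι ι ℂ} (hH : H.IsHermitian) (x : ι → ℂ) :
    star x ⬝ᵥ (H *ᵥ x) =
      ((∑ i, hH.eigenvalues i *
        ‖(star (hH.eigenvectorUnitary : Matrix ι ι ℂ) *ᵥ x) i‖^2 : ℝ) : ℂ) := by
  set U : Matrix ι ι ℂ := (hH.eigenvectorUnitary : Matrix ι ι ℂ) with hU
  set w : ι → ℂ := star U *ᵥ x with hw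
  have hsw : star w = star x ᵥ* U := by
    rw [hw, star_mulVec, star_eq_conjTranspose, conjTranspose_conjTranspose]
  conv_lhs => rw [hH.spectral_theorem, Unitary.conjStarAlgAut_apply]
  rw [← mulVec_mulVec, ← mulVec_mulVec, dotProduct_mulVec (star x), ← hsw, ← hw]
  exact star_dot_diag _ _

lemma herm_shift {H : Matrix ι ι ℂ} (hH : H.IsHermitian) (lam : ℝ) :
    (lam : ℂ) • (1 : Matrix ι ι ℂ) - H =
      (hH.eigenvectorUnitary : Matrix ι ι ℂ) *
        Matrix.diagonal (fun i => ((lam - hH.eigenvalues i : ℝ) : ℂ)) *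
        star (hH.eigenvectorUnitary : Matrix ι ι ℂ) := by
  have h1 : (hH.eigenvectorUnitary : Matrix ι ι ℂ) *
      star (hH.eigenvectorUnitary : Matrix ι ι ℂ) = 1 :=
    (Matrix.mem_unitaryGroup_iff).mp hH.eigenvectorUnitary.2
  have h2 : Matrix.diagonal (fun i => ((lam - hH.eigenvalues i : ℝ) : ℂ)) =
      (lam : ℂ) • (1 : Matrix ι ι ℂ) - Matrix.diagonal (RCLike.ofReal ∘ hH.eigenvalues) := by
    rw [← Matrix.diagonal_one, ← Matrix.diagonal_smul, Matrix.diagonal_sub]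
    ext i; push_cast; norm_num [RCLike.ofReal]
  rw [h2, Matrix.mul_sub, Matrix.sub_mul]
  conv_lhs => rw [hH.spectral_theorem, Unitary.conjStarAlgAut_apply]
  congr 1
  rw [Matrix.mul_smul, Matrix.mul_one, Matrix.smul_mul, h1]

/-- Norm of `(lam•1 - H) *ᵥ x` in coordinates. -/
lemma nsq_shift_mulVec {H : Matrix ι ι ℂ} (hH : H.IsHermitian) (lam : ℝ) (x : ι → ℂ) :
    nsq (((lam : ℂ) • (1 : Matrix ι ι ℂ) - H) *ᵥ x)
      = ∑ i, (lam - hH.eigenvalues i)^2 *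
          ‖(star (hH.eigenvectorUnitary : Matrix ι ι ℂ) *ᵥ x) i‖^2 := by
  rw [herm_shift hH lam, ← mulVec_mulVec, ← mulVec_mulVec,
    nsq_unitary_mulVec hH.eigenvectorUnitary, nsq_diagonal_mulVec]

/-- Singular-value style lower bound. -/
lemma sv_lower {H : Matrix ι ι ℂ} (hH : H.IsHermitian) (lam c : ℝ) (hc : 0 ≤ c)
    (h : ∀ i, c ≤ |lam - hH.eigenvalues i|) (x : ι → ℂ) :
    c^2 * nsq x ≤ nsq (((lam : ℂ) • (1 : Matrix ι ι ℂ) - H) *ᵥ x) := by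
  rw [nsq_shift_mulVec hH lam x]
  have hx : nsq x = ∑ i, ‖(star (hH.eigenvectorUnitary : Matrix ι ι ℂ) *ᵥ x) i‖^2 :=
    (nsq_star_unitary_mulVec hH.eigenvectorUnitary x).symm
  rw [hx, Finset.mul_sum]
  apply Finset.sum_le_sum
  intro i _
  have h1 : c^2 ≤ (lam - hH.eigenvalues i)^2 := by
    have := h i
    nlinarith [abs_nonneg (lam - hH.eigenvalues i), sq_abs (lam - hH.eigenvalues i)]
  exact mul_le_mul_of_nonneg_right h1 (sq_nonneg _)

/-- Rayleigh quotient upper bound. -/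
lemma rayleigh_upper {H : Matrix ι ι ℂ} (hH : H.IsHermitian) (c : ℝ)
    (h : ∀ i, hH.eigenvalues i ≤ c) (x : ι → ℂ) :
    (star x ⬝ᵥ (H *ᵥ x)).re ≤ c * nsq x := by
  rw [herm_quad hH x, Complex.ofReal_re]
  have hx : nsq x = ∑ i, ‖(star (hH.eigenvectorUnitary : Matrix ι ι ℂ) *ᵥ x) i‖^2 :=
    (nsq_star_unitary_mulVec hH.eigenvectorUnitary x).symm
  rw [hx, Finset.mul_sum]
  exact Finset.sum_le_sum fun i _ => mul_le_mul_of_nonneg_right (h i) (sq_nonneg _)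

lemma nsq_eq_norm_sq (v : EuclideanSpace ℂ ι) : nsq ⇑v = ‖v‖^2 := by
  rw [EuclideanSpace.norm_eq, Real.sq_sqrt (Finset.sum_nonneg fun _ _ => sq_nonneg _)]
  rfl

lemma specNorm_nonneg {p q : ℕ} (M : Matrix (Fin p) (Fin q) ℂ) : 0 ≤ specNorm M :=
  norm_nonneg _

lemma nsq_mulVec_le {p q : ℕ} (M : Matrix (Fin p) (Fin q) ℂ) (x : Fin q → ℂ) :
    nsq (M *ᵥ x) ≤ specNorm M ^ 2 * nsq x := by
  set T := LinearMap.toContinuousLinearMap (Matrix.toEuclideanLin M)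
  have h1 : T ((WithLp.equiv 2 (Fin q → ℂ)).symm x)
      = (WithLp.equiv 2 (Fin p → ℂ)).symm (M *ᵥ x) := rfl
  have h2 := T.le_opNorm ((WithLp.equiv 2 (Fin q → ℂ)).symm x)
  rw [h1] at h2
  have h3 : nsq (M *ᵥ x) = ‖(WithLp.equiv 2 (Fin p → ℂ)).symm (M *ᵥ x)‖^2 :=
    nsq_eq_norm_sq ((WithLp.equiv 2 (Fin p → ℂ)).symm (M *ᵥ x))
  have h4 : nsq x = ‖(WithLp.equiv 2 (Fin q → ℂ)).symm x‖^2 := nsq_eq_norm_sq ((WithLp.equiv 2 (Fin q → ℂ)).symm x)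
  rw [h3, h4, ← mul_pow]
  exact pow_le_pow_left₀ (norm_nonneg _) h2 2

lemma specNorm_conjTranspose {p q : ℕ} (M : Matrix (Fin p) (Fin q) ℂ) :
    specNorm Mᴴ = specNorm M := by
  unfold specNorm
  rw [Matrix.toEuclideanLin_conjTranspose_eq_adjoint, LinearMap.adjoint_toContinuousLinearMap]
  exact LinearIsometryEquiv.norm_map ContinuousLinearMap.adjoint _

lemma iInf_abs_nonneg {k : ℕ} (f : Fin k → ℝ) : 0 ≤ ⨅ j, |f j| := by
  cases isEmpty_or_nonempty (Fin k) with
  | inl h => simp [Real.iInf_of_isEmpty]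
  | inr h => exact le_ciInf fun j => abs_nonneg _

lemma product_step (d c Sx Sy e : ℝ) (hd : 0 < d) (hdc : d ≤ c) (hSx : 0 ≤ Sx) (hSy : 0 ≤ Sy)
    (hsum : Sx + Sy = 1) (h1 : d^2*Sx ≤ e^2*Sy) (h2 : c^2*Sy ≤ e^2*Sx) : d*c ≤ e^2 := by
  have hc : 0 < c := lt_of_lt_of_le hd hdc
  have hSy' : 0 < Sy := by
    rcases hSy.lt_or_eq with h | h
    · exact h
    · exfalso; rw [← h] at h1; nlinarith [mul_pos hd hd]
  have hSx' : 0 < Sx := by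
    rcases hSx.lt_or_eq with h | h
    · exact h
    · exfalso; rw [← h] at h2; nlinarith [mul_pos hc hc]
  have hmul : (d^2*Sx)*(c^2*Sy) ≤ (e^2*Sy)*(e^2*Sx) :=
    mul_le_mul h1 h2 (by positivity) (by positivity)
  have h3 : d^2*c^2 ≤ e^2*e^2 := by
    have hp : 0 < Sx*Sy := mul_pos hSx' hSy'
    nlinarith [hmul, hp]
  nlinarith [h3, mul_pos hd hc, sq_nonneg e]

lemma final_bound (d η e : ℝ) (hd : 0 < d) (hη : 0 ≤ η)
    (h : d*(d+η) ≤ e^2) : d ≤ 2*e^2/(η + Real.sqrt (η^2 + 4*e^2)) := by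
  have hepos : 0 < e^2 := by nlinarith
  set s := Real.sqrt (η^2 + 4*e^2) with hs
  have hs2 : s^2 = η^2 + 4*e^2 := Real.sq_sqrt (by positivity)
  have hs0 : 0 < s := Real.sqrt_pos.mpr (by positivity)
  rw [le_div_iff₀ (by positivity)]
  have hfac : (2*e^2 - d*η - d*s) * (2*e^2 - d*η + d*s) = 4*e^2*(e^2 - d*η - d^2) := by
    linear_combination (-(d^2)) * hs2
  have hBpos : 0 < 2*e^2 - d*η + d*s := by nlinarith [mul_nonneg hd.le hs0.le]
  have hfacnonneg : 0 ≤ 2*e^2 - d*η - d*s := by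
    by_contra hneg
    push_neg at hneg
    have := mul_neg_of_neg_of_pos hneg hBpos
    rw [hfac] at this
    nlinarith
  nlinarith

lemma star_sum_elim {a b : ℕ} (u : Fin a → ℂ) (w : Fin b → ℂ) :
    star (Sum.elim u w) = Sum.elim (star u) (star w) := by
  funext s; cases s <;> rfl

lemma nsq_sum_elim {a b : ℕ} (u : Fin a → ℂ) (w : Fin b → ℂ) :
    nsq (Sum.elim u w) = nsq u + nsq w := by
  simp [nsq, Fintype.sum_sum_type]

lemma real_smul_pi {α : Type*} (r : ℝ) (u : α → ℂ) : r • u = (r : ℂ) • u := by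
  funext a; simp [Complex.real_smul]

end Helpers

/-- The largest eigenvalue `lam1` of `A = fromBlocks H₁ Eᴴ E H₂` dominates the
largest eigenvalue `lamt1` of `Ã = fromBlocks H₁ 0 0 H₂`; and if `lam1 > lamt1`
then, with `η₁` the distance from `lamt1` to the spectrum of the block not
containing it, `(lam1 − lamt1)(lam1 − lamt1 + η₁) ≤ ‖E‖²`, whence
`lam1 − lamt1 ≤ 2‖E‖²/(η₁ + √(η₁² + 4‖E‖²))`. -/
theorem largest_eigenvalue_block_perturbation {m n : ℕ}
    (H₁ : Matrix (Fin m) (Fin m) ℂ) (H₂ : Matrix (Fin n) (Fin n) ℂ)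
    (E : Matrix (Fin n) (Fin m) ℂ)
    (hH₁ : H₁.IsHermitian) (hH₂ : H₂.IsHermitian)
    (hA : (Matrix.fromBlocks H₁ Eᴴ E H₂).IsHermitian)
    (lam1 lamt1 η₁ : ℝ)
    (hlam1 : IsGreatest (Set.range hA.eigenvalues) lam1)
    (hlamt1 : IsGreatest (Set.range hH₁.eigenvalues ∪ Set.range hH₂.eigenvalues) lamt1)
    (hη₁ : (lamt1 ∈ Set.range hH₁.eigenvalues →
              η₁ = ⨅ j, |lamt1 - hH₂.eigenvalues j|) ∧
           (lamt1 ∉ Set.range hH₁.eigenvalues →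
              η₁ = ⨅ j, |lamt1 - hH₁.eigenvalues j|)) :
    lamt1 ≤ lam1 ∧
    (lamt1 < lam1 →
      (lam1 - lamt1) * (lam1 - lamt1 + η₁) ≤ specNorm E ^ 2 ∧
      lam1 - lamt1 ≤
        2 * specNorm E ^ 2 / (η₁ + Real.sqrt (η₁ ^ 2 + 4 * specNorm E ^ 2))) := by
  have hub : ∀ c ∈ Set.range hA.eigenvalues, c ≤ lam1 := fun c hc => hlam1.2 hc
  have hubA : ∀ k, hA.eigenvalues k ≤ lam1 := fun k => hub _ ⟨k, rfl⟩
  have hub1 : ∀ k, hH₁.eigenvalues k ≤ lamt1 :=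
    fun k => hlamt1.2 (Set.mem_union_left _ ⟨k, rfl⟩)
  have hub2 : ∀ k, hH₂.eigenvalues k ≤ lamt1 :=
    fun k => hlamt1.2 (Set.mem_union_right _ ⟨k, rfl⟩)
  -- Part 1 : lamt1 ≤ lam1
  have part1 : lamt1 ≤ lam1 := by
    rcases hlamt1.1 with ⟨j, hj⟩ | ⟨j, hj⟩
    · -- lamt1 is an eigenvalue of H₁
      set u : Fin m → ℂ := ⇑(hH₁.eigenvectorBasis j) with hudef
      have hu : H₁ *ᵥ u = lamt1 • u := hj ▸ hH₁.mulVec_eigenvectorBasis j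
      have hnu : nsq u = 1 := by
        rw [hudef, nsq_eq_norm_sq, hH₁.eigenvectorBasis.orthonormal.1 j]; norm_num
      set z : (Fin m ⊕ Fin n) → ℂ := Sum.elim u 0 with hzdef
      have hcompute : (star z ⬝ᵥ ((Matrix.fromBlocks H₁ Eᴴ E H₂) *ᵥ z)).re = lamt1 * nsq u := by
        rw [hzdef, fromBlocks_mulVec, star_sum_elim, sumElim_dotProduct_sumElim]
        simp only [Sum.elim_comp_inl, Sum.elim_comp_inr, mulVec_zero, add_zero,
          star_zero, zero_dotProduct]
        rw [hu, real_smul_pi, dotProduct_smul, star_dot_self]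
        simp [← Complex.ofReal_mul]
      have hupper := rayleigh_upper hA lam1 hubA z
      rw [hcompute, hzdef, nsq_sum_elim] at hupper
      have hn0 : nsq (0 : Fin n → ℂ) = 0 := by simp [nsq]
      rw [hn0, add_zero, hnu] at hupper
      linarith
    · -- lamt1 is an eigenvalue of H₂
      set u : Fin n → ℂ := ⇑(hH₂.eigenvectorBasis j) with hudef
      have hu : H₂ *ᵥ u = lamt1 • u := hj ▸ hH₂.mulVec_eigenvectorBasis j
      have hnu : nsq u = 1 := by
        rw [hudef, nsq_eq_norm_sq, hH₂.eigenvectorBasis.orthonormal.1 j]; norm_num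
      set z : (Fin m ⊕ Fin n) → ℂ := Sum.elim 0 u with hzdef
      have hcompute : (star z ⬝ᵥ ((Matrix.fromBlocks H₁ Eᴴ E H₂) *ᵥ z)).re = lamt1 * nsq u := by
        rw [hzdef, fromBlocks_mulVec, star_sum_elim, sumElim_dotProduct_sumElim]
        simp only [Sum.elim_comp_inl, Sum.elim_comp_inr, mulVec_zero, zero_add,
          star_zero, zero_dotProduct]
        rw [hu, real_smul_pi, dotProduct_smul, star_dot_self]
        simp [← Complex.ofReal_mul]
      have hupper := rayleigh_upper hA lam1 hubA z
      rw [hcompute, hzdef, nsq_sum_elim] at hupper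
      have hn0 : nsq (0 : Fin m → ℂ) = 0 := by simp [nsq]
      rw [hn0, zero_add, hnu] at hupper
      linarith
  refine ⟨part1, fun hlt => ?_⟩
  -- Part 2
  set d : ℝ := lam1 - lamt1 with hd_def
  have hd : 0 < d := by simp [hd_def]; linarith
  set e : ℝ := specNorm E with he_def
  -- eigenvector of A for lam1
  obtain ⟨i, hi⟩ := hlam1.1
  set v : (Fin m ⊕ Fin n) → ℂ := ⇑(hA.eigenvectorBasis i) with hvdef
  have hv : (Matrix.fromBlocks H₁ Eᴴ E H₂) *ᵥ v = lam1 • v := hi ▸ hA.mulVec_eigenvectorBasis i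
  set x : Fin m → ℂ := fun a => v (Sum.inl a) with hxdef
  set y : Fin n → ℂ := fun b => v (Sum.inr b) with hydef
  have hxy : v = Sum.elim x y := by funext s; cases s <;> rfl
  rw [hxy, fromBlocks_mulVec] at hv
  have eq1 : H₁ *ᵥ x + Eᴴ *ᵥ y = (lam1 : ℂ) • x := by
    funext a
    have := congrFun hv (Sum.inl a)
    simpa [Complex.real_smul] using this
  have eq2 : E *ᵥ x + H₂ *ᵥ y = (lam1 : ℂ) • y := by
    funext b
    have := congrFun hv (Sum.inr b)
    simpa [Complex.real_smul] using this
  have heq1 : ((lam1 : ℂ) • (1 : Matrix (Fin m) (Fin m) ℂ) - H₁) *ᵥ x = Eᴴ *ᵥ y := by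
    rw [Matrix.sub_mulVec, Matrix.smul_mulVec, Matrix.one_mulVec, ← eq1]
    exact add_sub_cancel_left _ _
  have heq2 : ((lam1 : ℂ) • (1 : Matrix (Fin n) (Fin n) ℂ) - H₂) *ᵥ y = E *ᵥ x := by
    rw [Matrix.sub_mulVec, Matrix.smul_mulVec, Matrix.one_mulVec, ← eq2]
    exact add_sub_cancel_right _ _
  have hsum : nsq x + nsq y = 1 := by
    rw [← nsq_sum_elim, ← hxy, hvdef, nsq_eq_norm_sq, hA.eigenvectorBasis.orthonormal.1 i]
    norm_num
  -- the key product bound, by cases on where lamt1 lives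
  have key : d * (d + η₁) ≤ e^2 ∧ 0 ≤ η₁ := by
    by_cases hmem : lamt1 ∈ Set.range hH₁.eigenvalues
    · have hη := hη₁.1 hmem
      have hηnn : 0 ≤ η₁ := hη ▸ iInf_abs_nonneg _
      have habs1 : ∀ k, d ≤ |lam1 - hH₁.eigenvalues k| := fun k =>
        le_trans (by have := hub1 k; simp [hd_def]; linarith) (le_abs_self _)
      have habs2 : ∀ k, d + η₁ ≤ |lam1 - hH₂.eigenvalues k| := by
        intro k
        have h1 : η₁ ≤ |lamt1 - hH₂.eigenvalues k| := hη ▸ ciInf_le (Finite.bddBelow_range _) k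
        have h2 : |lamt1 - hH₂.eigenvalues k| = lamt1 - hH₂.eigenvalues k :=
          abs_of_nonneg (by have := hub2 k; linarith)
        refine le_trans ?_ (le_abs_self _)
        rw [h2] at h1
        simp [hd_def]; linarith
      have h1 : d^2 * nsq x ≤ e^2 * nsq y := by
        calc d^2 * nsq x ≤ nsq (((lam1 : ℂ) • 1 - H₁) *ᵥ x) := sv_lower hH₁ lam1 d hd.le habs1 x
          _ = nsq (Eᴴ *ᵥ y) := by rw [heq1]
          _ ≤ specNorm Eᴴ ^ 2 * nsq y := nsq_mulVec_le _ _
          _ = e^2 * nsq y := by rw [specNorm_conjTranspose]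
      have h2 : (d + η₁)^2 * nsq y ≤ e^2 * nsq x := by
        calc (d + η₁)^2 * nsq y ≤ nsq (((lam1 : ℂ) • 1 - H₂) *ᵥ y) :=
              sv_lower hH₂ lam1 (d + η₁) (by linarith) habs2 y
          _ = nsq (E *ᵥ x) := by rw [heq2]
          _ ≤ e^2 * nsq x := nsq_mulVec_le _ _
      exact ⟨product_step d (d + η₁) (nsq x) (nsq y) e hd (by linarith)
        (nsq_nonneg x) (nsq_nonneg y) hsum h1 h2, hηnn⟩
    · have hη := hη₁.2 hmem
      have hηnn : 0 ≤ η₁ := hη ▸ iInf_abs_nonneg _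
      have hmem2 : lamt1 ∈ Set.range hH₂.eigenvalues := by
        rcases hlamt1.1 with h | h
        · exact absurd h hmem
        · exact h
      have habs2 : ∀ k, d ≤ |lam1 - hH₂.eigenvalues k| := fun k =>
        le_trans (by have := hub2 k; simp [hd_def]; linarith) (le_abs_self _)
      have habs1 : ∀ k, d + η₁ ≤ |lam1 - hH₁.eigenvalues k| := by
        intro k
        have h1 : η₁ ≤ |lamt1 - hH₁.eigenvalues k| := hη ▸ ciInf_le (Finite.bddBelow_range _) k
        have h2 : |lamt1 - hH₁.eigenvalues k| = lamt1 - hH₁.eigenvalues k :=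
          abs_of_nonneg (by have := hub1 k; linarith)
        refine le_trans ?_ (le_abs_self _)
        rw [h2] at h1
        simp [hd_def]; linarith
      have h1 : (d + η₁)^2 * nsq x ≤ e^2 * nsq y := by
        calc (d + η₁)^2 * nsq x ≤ nsq (((lam1 : ℂ) • 1 - H₁) *ᵥ x) :=
              sv_lower hH₁ lam1 (d + η₁) (by linarith) habs1 x
          _ = nsq (Eᴴ *ᵥ y) := by rw [heq1]
          _ ≤ specNorm Eᴴ ^ 2 * nsq y := nsq_mulVec_le _ _
          _ = e^2 * nsq y := by rw [specNorm_conjTranspose]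
      have h2 : d^2 * nsq y ≤ e^2 * nsq x := by
        calc d^2 * nsq y ≤ nsq (((lam1 : ℂ) • 1 - H₂) *ᵥ y) := sv_lower hH₂ lam1 d hd.le habs2 y
          _ = nsq (E *ᵥ x) := by rw [heq2]
          _ ≤ e^2 * nsq x := nsq_mulVec_le _ _
      exact ⟨product_step d (d + η₁) (nsq y) (nsq x) e hd (by linarith)
        (nsq_nonneg y) (nsq_nonneg x) (by linarith) h2 h1, hηnn⟩
  obtain ⟨hkey, hηnn⟩ := key
  refine ⟨hkey, ?_⟩
  have := final_bound d η₁ e hd hηnn hkey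
  convert this using 3 <;> ring
end

section
/- Let A = fromBlocks H₁ Eᴴ E H₂ be an (m+n)×(m+n) Hermitian complex matrix and let λ₁ be its largest eigenvalue. Suppose λ₁ is strictly larger than every eigenvalue of H₂, so that H₂ − λ₁·I is invertible and negative definite. Then the Hermitian matrix M(λ₁) := H₁ − λ₁·I − Eᴴ·(H₂ − λ₁·I)⁻¹·E is negative semidefinite and has 0 as an eigenvalue; i.e., the largest eigenvalue of M(λ₁) equals 0. -/
open Matrix ComplexOrder

section Aux
variable {k : Type*} [Fintype k] [DecidableEq k]

lemma aux_decomp {A : Matrix k k ℂ} (hA : A.IsHermitian) (c : ℝ) :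
    (c : ℂ) • (1 : Matrix k k ℂ) - A =
      (hA.eigenvectorUnitary : Matrix k k ℂ) *
        Matrix.diagonal (fun i => (c : ℂ) - hA.eigenvalues i) *
        star (hA.eigenvectorUnitary : Matrix k k ℂ) := by
  have hU : (hA.eigenvectorUnitary : Matrix k k ℂ) *
      star (hA.eigenvectorUnitary : Matrix k k ℂ) = 1 :=
    Matrix.mem_unitaryGroup_iff.mp hA.eigenvectorUnitary.2
  have h1 : (c : ℂ) • (1 : Matrix k k ℂ) =
      (hA.eigenvectorUnitary : Matrix k k ℂ) * ((c : ℂ) • 1) *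
        star (hA.eigenvectorUnitary : Matrix k k ℂ) := by
    rw [Matrix.mul_smul, Matrix.smul_mul, mul_one, hU]
  have h2 : (c : ℂ) • (1 : Matrix k k ℂ) -
      Matrix.diagonal (RCLike.ofReal ∘ hA.eigenvalues) =
      Matrix.diagonal (fun i => (c : ℂ) - hA.eigenvalues i) := by
    ext i j
    by_cases h : i = j <;> simp [h, Matrix.one_apply, Matrix.diagonal]
  conv_lhs => rw [hA.spectral_theorem, h1]
  rw [Unitary.conjStarAlgAut_apply, ← Matrix.sub_mul, ← Matrix.mul_sub, h2]

lemma aux_posSemidef {A : Matrix k k ℂ} (hA : A.IsHermitian) {c : ℝ}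
    (h : ∀ i, hA.eigenvalues i ≤ c) :
    ((c : ℂ) • (1 : Matrix k k ℂ) - A).PosSemidef := by
  rw [aux_decomp hA c]
  exact (Matrix.posSemidef_diagonal_iff.mpr fun i => by
    rw [sub_nonneg]; exact_mod_cast h i).mul_mul_conjTranspose_same _

lemma aux_det {A : Matrix k k ℂ} (hA : A.IsHermitian) (c : ℝ) :
    ((c : ℂ) • (1 : Matrix k k ℂ) - A).det = ∏ i, ((c : ℂ) - hA.eigenvalues i) := by
  have hU : (hA.eigenvectorUnitary : Matrix k k ℂ) *
      star (hA.eigenvectorUnitary : Matrix k k ℂ) = 1 :=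
    Matrix.mem_unitaryGroup_iff.mp hA.eigenvectorUnitary.2
  rw [aux_decomp hA c, Matrix.det_mul_right_comm, hU, one_mul, Matrix.det_diagonal]

lemma aux_posDef_of_isUnit {A : Matrix k k ℂ} (hA : A.PosSemidef) (hu : IsUnit A) :
    A.PosDef := by
  rw [Matrix.posDef_iff_dotProduct_mulVec]
  refine ⟨hA.1, fun x hx => ?_⟩
  have h2 : A *ᵥ x ≠ 0 := by
    intro h
    exact hx ((Matrix.mulVec_injective_iff_isUnit.mpr hu) (by simpa using h))
  have h3 : star x ⬝ᵥ A *ᵥ x ≠ 0 := fun h => h2 ((hA.dotProduct_mulVec_zero_iff x).mp h)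
  exact lt_of_le_of_ne ((Matrix.posSemidef_iff_dotProduct_mulVec.mp hA).2 x) (Ne.symm h3)

lemma aux_posDef {A : Matrix k k ℂ} (hA : A.IsHermitian) {c : ℝ}
    (h : ∀ i, hA.eigenvalues i < c) :
    ((c : ℂ) • (1 : Matrix k k ℂ) - A).PosDef := by
  refine aux_posDef_of_isUnit (aux_posSemidef hA fun i => (h i).le) ?_
  rw [Matrix.isUnit_iff_isUnit_det, aux_det hA c]
  refine (Finset.prod_ne_zero_iff.mpr fun i _ => ?_).isUnit
  rw [sub_ne_zero]
  exact_mod_cast (h i).ne'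

lemma aux_eig_nonpos {A : Matrix k k ℂ} (hA : A.IsHermitian)
    (h : (-A).PosSemidef) (i : k) : hA.eigenvalues i ≤ 0 := by
  have h1 := (Matrix.posSemidef_iff_dotProduct_mulVec.mp h).2 ⇑(hA.eigenvectorBasis i)
  rw [Matrix.neg_mulVec, dotProduct_neg, le_neg, neg_zero] at h1
  rw [hA.eigenvalues_eq i]
  simpa using (Complex.le_def.mp h1).1

end Aux

/-- If `λ₁`, the largest eigenvalue of the Hermitian block matrix
`A = fromBlocks H₁ Eᴴ E H₂`, is strictly larger than every eigenvalue of `H₂`,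
then `H₂ − λ₁ I` is invertible and negative definite, and the Hermitian matrix
`M(λ₁) = H₁ − λ₁ I − Eᴴ (H₂ − λ₁ I)⁻¹ E` is negative semidefinite with `0` as
its largest eigenvalue. -/
theorem schur_complement_at_largest_eigenvalue {m n : ℕ}
    (H₁ : Matrix (Fin m) (Fin m) ℂ) (H₂ : Matrix (Fin n) (Fin n) ℂ)
    (E : Matrix (Fin n) (Fin m) ℂ)
    (hH₁ : H₁.IsHermitian) (hH₂ : H₂.IsHermitian)
    (hA : (Matrix.fromBlocks H₁ Eᴴ E H₂).IsHermitian)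
    (lam1 : ℝ) (hlam1 : IsGreatest (Set.range hA.eigenvalues) lam1)
    (hgt : ∀ j, hH₂.eigenvalues j < lam1)
    (hM : (H₁ - (lam1 : ℂ) • 1 - Eᴴ * (H₂ - (lam1 : ℂ) • 1)⁻¹ * E).IsHermitian) :
    IsUnit (H₂ - (lam1 : ℂ) • 1) ∧
    (-(H₂ - (lam1 : ℂ) • 1)).PosDef ∧
    (-(H₁ - (lam1 : ℂ) • 1 - Eᴴ * (H₂ - (lam1 : ℂ) • 1)⁻¹ * E)).PosSemidef ∧
    IsGreatest (Set.range hM.eigenvalues) 0 := by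
  have hD : ((lam1 : ℂ) • (1 : Matrix (Fin n) (Fin n) ℂ) - H₂).PosDef := aux_posDef hH₂ hgt
  have hDunit : IsUnit ((lam1 : ℂ) • (1 : Matrix (Fin n) (Fin n) ℂ) - H₂) := hD.isUnit
  have hDdet : IsUnit ((lam1 : ℂ) • (1 : Matrix (Fin n) (Fin n) ℂ) - H₂).det :=
    (Matrix.isUnit_iff_isUnit_det _).mp hDunit
  haveI : Invertible ((lam1 : ℂ) • (1 : Matrix (Fin n) (Fin n) ℂ) - H₂) :=
    hDunit.invertible
  have hUnit2 : IsUnit (H₂ - (lam1 : ℂ) • 1) := by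
    rw [← neg_sub]; exact hDunit.neg
  have hinv : (H₂ - (lam1 : ℂ) • 1)⁻¹ =
      -((lam1 : ℂ) • (1 : Matrix (Fin n) (Fin n) ℂ) - H₂)⁻¹ := by
    rw [← neg_sub]
    refine Matrix.inv_eq_right_inv ?_
    rw [Matrix.neg_mul, Matrix.mul_neg, neg_neg, Matrix.mul_nonsing_inv _ hDdet]
  have hAeig : ∀ i, hA.eigenvalues i ≤ lam1 := fun i => hlam1.2 ⟨i, rfl⟩
  have hblock : (lam1 : ℂ) • (1 : Matrix (Fin m ⊕ Fin n) (Fin m ⊕ Fin n) ℂ) -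
      Matrix.fromBlocks H₁ Eᴴ E H₂ =
      Matrix.fromBlocks ((lam1 : ℂ) • 1 - H₁) (-Eᴴ) (-E) ((lam1 : ℂ) • 1 - H₂) := by
    ext (i | i) (j | j) <;>
      simp [Matrix.fromBlocks, Matrix.one_apply, Matrix.smul_apply, Matrix.sub_apply]
  have hPSD_A := aux_posSemidef hA hAeig
  rw [hblock] at hPSD_A
  have hS : (((lam1 : ℂ) • 1 - H₁) -
      (-Eᴴ) * ((lam1 : ℂ) • (1 : Matrix (Fin n) (Fin n) ℂ) - H₂)⁻¹ * (-E)).PosSemidef := by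
    have hS' := (Matrix.PosDef.fromBlocks₂₂ ((lam1 : ℂ) • 1 - H₁) (-Eᴴ) hD).mp
      (by convert hPSD_A using 2; rfl; simp)
    simpa only [Matrix.conjTranspose_neg, Matrix.conjTranspose_conjTranspose] using hS'
  have hMS : -(H₁ - (lam1 : ℂ) • 1 - Eᴴ * (H₂ - (lam1 : ℂ) • 1)⁻¹ * E) =
      ((lam1 : ℂ) • 1 - H₁) -
        (-Eᴴ) * ((lam1 : ℂ) • (1 : Matrix (Fin n) (Fin n) ℂ) - H₂)⁻¹ * (-E) := by
    rw [hinv]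
    simp only [Matrix.mul_neg, Matrix.neg_mul, neg_neg]
    abel
  have hNegPSD : (-(H₁ - (lam1 : ℂ) • 1 - Eᴴ * (H₂ - (lam1 : ℂ) • 1)⁻¹ * E)).PosSemidef := by
    rw [hMS]; exact hS
  -- determinant of the shifted block matrix is zero
  obtain ⟨i₀, hi₀⟩ := hlam1.1
  have hdetA : ((lam1 : ℂ) • (1 : Matrix (Fin m ⊕ Fin n) (Fin m ⊕ Fin n) ℂ) -
      Matrix.fromBlocks H₁ Eᴴ E H₂).det = 0 := by
    rw [aux_det hA lam1]
    refine Finset.prod_eq_zero (Finset.mem_univ i₀) ?_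
    rw [hi₀, sub_self]
  have hdetS : (((lam1 : ℂ) • 1 - H₁) -
      (-Eᴴ) * ((lam1 : ℂ) • (1 : Matrix (Fin n) (Fin n) ℂ) - H₂)⁻¹ * (-E)).det = 0 := by
    have := Matrix.det_fromBlocks₂₂ ((lam1 : ℂ) • 1 - H₁) (-Eᴴ) (-E)
      ((lam1 : ℂ) • (1 : Matrix (Fin n) (Fin n) ℂ) - H₂)
    rw [Matrix.invOf_eq_nonsing_inv] at this
    rw [hblock, this] at hdetA
    exact (mul_eq_zero.mp hdetA).resolve_left hDdet.ne_zero
  have hdetM : (H₁ - (lam1 : ℂ) • 1 - Eᴴ * (H₂ - (lam1 : ℂ) • 1)⁻¹ * E).det = 0 := by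
    rw [← hMS] at hdetS
    rw [Matrix.det_neg] at hdetS
    simpa using hdetS
  -- 0 is an eigenvalue of M
  have hexists : ∃ i, hM.eigenvalues i = 0 := by
    rw [hM.det_eq_prod_eigenvalues] at hdetM
    obtain ⟨i, _, hi⟩ := Finset.prod_eq_zero_iff.mp hdetM
    exact ⟨i, RCLike.ofReal_eq_zero.mp hi⟩
  have hub : ∀ i, hM.eigenvalues i ≤ 0 := aux_eig_nonpos hM hNegPSD
  refine ⟨hUnit2, by rwa [neg_sub], hNegPSD, ?_⟩
  obtain ⟨i, hi⟩ := hexists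
  exact ⟨⟨i, hi⟩, fun y hy => by obtain ⟨j, rfl⟩ := hy; exact hub j⟩
end

section
/- Let A be an N×N Hermitian complex matrix (N ≥ 2), let x be a unit vector in ℂ^N, set λ̃ := xᴴAx and r := Ax − λ̃x. Let X₂ be an N×(N−1) matrix whose columns form an orthonormal basis of the orthogonal complement of x, and let Ĥ := X₂ᴴAX₂ be the compression of A to that complement, with η̂ := the minimum of |λ̃ − μ| over eigenvalues μ of Ĥ. Let λ₁ ≥ … ≥ λ_N be the eigenvalues of A in decreasing order, and let k be the position of λ̃ in the decreasing rearrangement of the multiset {λ̃} ∪ spec(Ĥ). Then |λ_k − λ̃| ≤ 2‖r‖² / (η̂ + √(η̂² + 4‖r‖²)). -/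
open Matrix

/-- The Euclidean (ℓ²) norm of a complex vector. -/
noncomputable def euclNorm {N : ℕ} (v : Fin N → ℂ) : ℝ :=
  ‖(WithLp.equiv 2 (Fin N → ℂ)).symm v‖

open Finset Submodule

namespace RitzAux

lemma dot_sum_left {m : ℕ} {ι : Type*} [Fintype ι] (f : ι → (Fin m → ℂ)) (w : Fin m → ℂ) :
    (∑ i, f i) ⬝ᵥ w = ∑ i, f i ⬝ᵥ w := by
  simp only [dotProduct, Finset.sum_apply, Finset.sum_mul]
  exact Finset.sum_comm

lemma dot_sum_right {m : ℕ} {ι : Type*} [Fintype ι] (f : ι → (Fin m → ℂ)) (w : Fin m → ℂ) :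
    w ⬝ᵥ (∑ i, f i) = ∑ i, w ⬝ᵥ f i := by
  simp only [dotProduct, Finset.sum_apply, Finset.mul_sum]
  exact Finset.sum_comm

lemma inner_piLp_equiv_symm {m : ℕ} (x y : Fin m → ℂ) :
    inner ℂ ((WithLp.equiv 2 (Fin m → ℂ)).symm x) ((WithLp.equiv 2 (Fin m → ℂ)).symm y)
      = star x ⬝ᵥ y := by
  rw [dotProduct_comm]; rfl

lemma mulVec_sum {m m' : ℕ} {ι : Type*} [Fintype ι] (M : Matrix (Fin m') (Fin m) ℂ)
    (f : ι → (Fin m → ℂ)) : M *ᵥ (∑ i, f i) = ∑ i, M *ᵥ f i := by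
  ext j
  simp only [mulVec, Finset.sum_apply]
  exact dot_sum_right _ _

lemma pairing {m : ℕ} {ι : Type*} [Fintype ι] [DecidableEq ι] (b : ι → (Fin m → ℂ))
    (horm : ∀ i j, star (b i) ⬝ᵥ b j = if i = j then 1 else 0) (c d : ι → ℂ) :
    star (∑ i, c i • b i) ⬝ᵥ (∑ i, d i • b i) = ∑ i, starRingEnd ℂ (c i) * d i := by
  rw [star_sum, dot_sum_left]
  refine Finset.sum_congr rfl fun i _ => ?_
  rw [dot_sum_right]
  have : ∀ j, star (c i • b i) ⬝ᵥ (d j • b j)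
      = (starRingEnd ℂ (c i) * d j) * (star (b i) ⬝ᵥ b j) := by
    intro j
    rw [star_smul, smul_dotProduct, dotProduct_smul]
    simp [mul_comm, mul_left_comm, Complex.star_def]
    ring
  simp only [this, horm]
  simp [Finset.sum_ite_eq]

lemma dot_self_re {m : ℕ} (z : Fin m → ℂ) :
    (star z ⬝ᵥ z).re = ‖(WithLp.equiv 2 (Fin m → ℂ)).symm z‖ ^ 2 := by
  have h := inner_piLp_equiv_symm z z
  rw [inner_self_eq_norm_sq_to_K] at h
  rw [← h]
  norm_cast

/-- the key scalar inequality -/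
lemma scalar_key (R η : ℝ) (hR : 0 ≤ R) (hη : 0 ≤ η) (a b : ℝ) (ha : 0 ≤ a) (hb : 0 ≤ b) :
    2*a*b*R - η*b^2 ≤ (2*R^2/(η+Real.sqrt (η^2+4*R^2))) * (a^2+b^2) := by
  rcases eq_or_lt_of_le hR with h0 | hRpos
  · rw [← h0]
    have h1 : 2*a*b*0 - η*b^2 ≤ 0 := by nlinarith
    have h2 : (0:ℝ) ≤ (2*(0:ℝ)^2/(η+Real.sqrt (η^2+4*(0:ℝ)^2))) * (a^2+b^2) := by positivity
    linarith
  · set S := Real.sqrt (η^2+4*R^2) with hS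
    have hS2 : S^2 = η^2+4*R^2 := Real.sq_sqrt (by positivity)
    have hSpos : 0 < S := Real.sqrt_pos.2 (by positivity)
    have hD : 0 < η + S := by linarith
    set δ := 2*R^2/(η+S) with hδ
    have hδpos : 0 < δ := by positivity
    have hkey : δ*(δ+η) = R^2 := by
      rw [hδ]
      field_simp
      nlinarith [hS2]
    nlinarith [sq_nonneg (δ*a - R*b), mul_pos hδpos hδpos, sq_nonneg b, mul_nonneg hη (sq_nonneg b)]

end RitzAux

namespace RitzAux

lemma real_smul_eq {m : ℕ} (r : ℝ) (w : Fin m → ℂ) : r • w = (r : ℂ) • w := by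
  funext k
  simp [Complex.real_smul]

lemma equiv_sum {m : ℕ} {ι : Type*} [Fintype ι] (f : ι → EuclideanSpace ℂ (Fin m)) :
    WithLp.equiv 2 (Fin m → ℂ) (∑ i, f i) = ∑ i, WithLp.equiv 2 (Fin m → ℂ) (f i) :=
  map_sum (WithLp.linearEquiv 2 ℂ (Fin m → ℂ)) f Finset.univ

lemma equiv_smul {m : ℕ} (c : ℂ) (f : EuclideanSpace ℂ (Fin m)) :
    WithLp.equiv 2 (Fin m → ℂ) (c • f) = c • WithLp.equiv 2 (Fin m → ℂ) f := rfl

lemma aux_eigspan {m : ℕ} {A : Matrix (Fin m) (Fin m) ℂ} (hA : A.IsHermitian) (s : Finset (Fin m))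
    (v : EuclideanSpace ℂ (Fin m))
    (hv : v ∈ Submodule.span ℂ (Set.range fun i : ↥s => hA.eigenvectorBasis (i : Fin m))) :
    ∃ d : Fin m → ℝ, (∀ i, 0 ≤ d i) ∧ (∀ i, i ∉ s → d i = 0) ∧
      (star (WithLp.equiv 2 _ v) ⬝ᵥ (WithLp.equiv 2 _ v)).re = ∑ i, d i ∧
      (star (WithLp.equiv 2 _ v) ⬝ᵥ (A *ᵥ WithLp.equiv 2 _ v)).re
        = ∑ i, hA.eigenvalues i * d i := by
  classical
  obtain ⟨c, hc⟩ := (mem_span_range_iff_exists_fun ℂ).mp hv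
  set bv : ↥s → (Fin m → ℂ) := fun i => WithLp.equiv 2 _ (hA.eigenvectorBasis (i : Fin m)) with hbv
  have horm : ∀ i j : ↥s, star (bv i) ⬝ᵥ bv j = if i = j then 1 else 0 := by
    intro i j
    have h := orthonormal_iff_ite.mp hA.eigenvectorBasis.orthonormal (i : Fin m) (j : Fin m)
    rw [EuclideanSpace.inner_eq_star_dotProduct] at h
    rw [hbv]
    simp only []
    rw [dotProduct_comm] at h
    erw [h]
    exact if_congr Subtype.ext_iff.symm rfl rfl
  have hvp : WithLp.equiv 2 _ v = ∑ i : ↥s, c i • bv i := by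
    rw [← hc, equiv_sum]
    rfl
  have hAvp : A *ᵥ WithLp.equiv 2 _ v = ∑ i : ↥s, (c i * (hA.eigenvalues i : ℂ)) • bv i := by
    rw [hvp, mulVec_sum]
    refine Finset.sum_congr rfl fun i _ => ?_
    rw [mulVec_smul, hbv]
    erw [hA.mulVec_eigenvectorBasis]
    rw [real_smul_eq, smul_smul]
    rfl
  set d : Fin m → ℝ := fun i => if h : i ∈ s then Complex.normSq (c ⟨i, h⟩) else 0 with hd
  have hsum : ∀ g : Fin m → ℝ, ∑ i, g i * d i = ∑ i : ↥s, g i * Complex.normSq (c i) := by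
    intro g
    rw [← Finset.sum_subset (Finset.subset_univ s)
      (fun x _ hx => by simp [hd, dif_neg hx])]
    rw [← Finset.sum_attach s (fun i => g i * d i)]
    refine Finset.sum_congr rfl fun i _ => ?_
    simp [hd]
  refine ⟨d, fun i => ?_, fun i hi => by simp [hd, dif_neg hi], ?_, ?_⟩
  · by_cases h : i ∈ s <;> simp [hd, h, Complex.normSq_nonneg]
  · rw [hvp, pairing bv horm]
    have := hsum (fun _ => 1)
    simp only [one_mul] at this
    rw [this, Complex.re_sum]
    refine Finset.sum_congr rfl fun i _ => ?_
    rw [← Complex.normSq_eq_conj_mul_self]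
    simp
  · rw [hAvp, hvp, pairing bv horm, Complex.re_sum, hsum]
    refine Finset.sum_congr rfl fun i _ => ?_
    rw [show (starRingEnd ℂ) (c i) * (c i * (hA.eigenvalues i : ℂ))
        = ((starRingEnd ℂ) (c i) * c i) * (hA.eigenvalues i : ℂ) by ring,
      ← Complex.normSq_eq_conj_mul_self]
    rw [← Complex.ofReal_mul]
    rw [Complex.ofReal_re]
    ring

end RitzAux

namespace RitzAux

lemma aux_decomp {n : ℕ} {A : Matrix (Fin (n+1)) (Fin (n+1)) ℂ} (hA : A.IsHermitian)
    (x : Fin (n+1) → ℂ) (hxx : star x ⬝ᵥ x = 1)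
    (lamt : ℝ) (hlamt : (lamt : ℂ) = star x ⬝ᵥ A.mulVec x)
    (X₂ : Matrix (Fin (n+1)) (Fin n) ℂ) (hX₂ : X₂ᴴ * X₂ = 1) (hX₂x : X₂ᴴ.mulVec x = 0)
    (hH : (X₂ᴴ * A * X₂).IsHermitian)
    (s : Finset (Fin n)) (v : EuclideanSpace ℂ (Fin (n+1)))
    (hv : v ∈ Submodule.span ℂ (Set.range (Sum.elim
        (fun _ : Fin 1 => (WithLp.equiv 2 (Fin (n+1) → ℂ)).symm x)
        (fun j : ↥s => (WithLp.equiv 2 (Fin (n+1) → ℂ)).symm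
          (X₂ *ᵥ WithLp.equiv 2 (Fin n → ℂ) (hH.eigenvectorBasis (j : Fin n))))))) :
    ∃ a b t : ℝ, ∃ d : Fin n → ℝ, 0 ≤ a ∧ 0 ≤ b ∧
      |t| ≤ a * b * euclNorm (A.mulVec x - (lamt : ℂ) • x) ∧
      (∀ j, 0 ≤ d j) ∧ (∀ j, j ∉ s → d j = 0) ∧ b ^ 2 = ∑ j, d j ∧
      (star (WithLp.equiv 2 _ v) ⬝ᵥ WithLp.equiv 2 _ v).re = a ^ 2 + b ^ 2 ∧
      (star (WithLp.equiv 2 _ v) ⬝ᵥ (A *ᵥ WithLp.equiv 2 _ v)).re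
        = lamt * a ^ 2 + 2 * t + ∑ j, hH.eigenvalues j * d j := by
  classical
  obtain ⟨c, hc⟩ := (mem_span_range_iff_exists_fun ℂ).mp hv
  set uv : ↥s → (Fin n → ℂ) := fun j => WithLp.equiv 2 _ (hH.eigenvectorBasis (j : Fin n)) with huv
  set c₀ : ℂ := c (Sum.inl 0) with hc₀
  set w : Fin n → ℂ := ∑ j : ↥s, c (Sum.inr j) • uv j with hw
  set z : Fin (n+1) → ℂ := X₂ *ᵥ w with hz
  set r : Fin (n+1) → ℂ := A.mulVec x - (lamt : ℂ) • x with hr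
  -- basic orthogonality facts
  have hxX : ∀ q : Fin n → ℂ, star x ⬝ᵥ (X₂ *ᵥ q) = 0 := by
    intro q
    rw [dotProduct_mulVec]
    have : star x ᵥ* X₂ = star (X₂ᴴ *ᵥ x) := by
      rw [star_mulVec, conjTranspose_conjTranspose]
    rw [this, hX₂x]
    simp
  have hXx : ∀ q : Fin n → ℂ, star (X₂ *ᵥ q) ⬝ᵥ x = 0 := by
    intro q
    have h := congrArg star (hxX q)
    rw [star_dotProduct, star_star, star_zero] at h
    exact h
  have hXX : ∀ q q' : Fin n → ℂ, star (X₂ *ᵥ q) ⬝ᵥ (X₂ *ᵥ q') = star q ⬝ᵥ q' := by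
    intro q q'
    rw [star_mulVec, ← dotProduct_mulVec, mulVec_mulVec, hX₂, one_mulVec]
  have hxz : star x ⬝ᵥ z = 0 := hxX w
  have hzx : star z ⬝ᵥ x = 0 := hXx w
  have hzz : star z ⬝ᵥ z = star w ⬝ᵥ w := hXX w w
  -- representation of v
  have hvp : WithLp.equiv 2 _ v = c₀ • x + z := by
    rw [← hc, equiv_sum]
    rw [Fintype.sum_sum_type]
    congr 1
    · rw [Fin.sum_univ_one]; rfl
    · rw [hz, hw, mulVec_sum]
      refine Finset.sum_congr rfl fun j _ => ?_
      rw [mulVec_smul]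
      rfl
  -- cross term
  set tc : ℂ := star z ⬝ᵥ (A *ᵥ x) with htc
  have h_tc_r : tc = star z ⬝ᵥ r := by
    rw [hr, dotProduct_sub, dotProduct_smul, hz, hXx]
    simp [htc, hz]
  have h_conj : star x ⬝ᵥ (A *ᵥ z) = starRingEnd ℂ tc := by
    have : star tc = star x ⬝ᵥ (A *ᵥ z) := by
      rw [htc, star_dotProduct, star_star, star_mulVec, ← dotProduct_mulVec, hA.eq]
    rw [← this]
    rfl
  -- the H-block
  have ht22 : star z ⬝ᵥ (A *ᵥ z) = star w ⬝ᵥ ((X₂ᴴ * A * X₂) *ᵥ w) := by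
    rw [hz, star_mulVec, mulVec_mulVec, ← dotProduct_mulVec, mulVec_mulVec, ← Matrix.mul_assoc]
  -- eigen-expansion of w
  have hwmem : (WithLp.equiv 2 (Fin n → ℂ)).symm w ∈ Submodule.span ℂ
      (Set.range fun j : ↥s => hH.eigenvectorBasis (j : Fin n)) := by
    refine (mem_span_range_iff_exists_fun ℂ).mpr ⟨fun j => c (Sum.inr j), ?_⟩
    apply (WithLp.equiv 2 (Fin n → ℂ)).injective
    rw [equiv_sum, Equiv.apply_symm_apply, hw]
    rfl
  obtain ⟨d, hd0, hds, hdsum, hdA⟩ := aux_eigspan hH s _ hwmem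
  rw [Equiv.apply_symm_apply] at hdsum hdA
  -- definitions of a b t
  set a : ℝ := ‖c₀‖ with ha
  set b : ℝ := Real.sqrt (∑ j, d j) with hb
  have hdsum0 : (0:ℝ) ≤ ∑ j, d j := Finset.sum_nonneg fun j _ => hd0 j
  have hb2 : b ^ 2 = ∑ j, d j := Real.sq_sqrt hdsum0
  have hwn : ‖(WithLp.equiv 2 (Fin n → ℂ)).symm w‖ = b := by
    have h1 : ‖(WithLp.equiv 2 (Fin n → ℂ)).symm w‖ ^ 2 = ∑ j, d j := by
      rw [← dot_self_re, hdsum]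
    rw [← Real.sqrt_sq (norm_nonneg _), h1, hb]
  have hzn : ‖(WithLp.equiv 2 (Fin (n+1) → ℂ)).symm z‖ = b := by
    have h1 : ‖(WithLp.equiv 2 (Fin (n+1) → ℂ)).symm z‖ ^ 2 = ∑ j, d j := by
      rw [← dot_self_re, hzz, hdsum]
    rw [← Real.sqrt_sq (norm_nonneg _), h1, hb]
  set t : ℝ := (c₀ * tc).re with htdef
  have htb : |t| ≤ a * b * euclNorm r := by
    have h1 : |t| ≤ ‖c₀ * tc‖ := Complex.abs_re_le_norm _
    rw [norm_mul] at h1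
    have h2 : ‖tc‖ ≤ b * euclNorm r := by
      have h3 : tc = inner ℂ ((WithLp.equiv 2 (Fin (n+1) → ℂ)).symm z)
          ((WithLp.equiv 2 (Fin (n+1) → ℂ)).symm r) := by
        rw [h_tc_r, inner_piLp_equiv_symm]
      have h4 := norm_inner_le_norm (𝕜 := ℂ)
        ((WithLp.equiv 2 (Fin (n+1) → ℂ)).symm z) ((WithLp.equiv 2 (Fin (n+1) → ℂ)).symm r)
      rw [← h3, hzn] at h4
      exact h4
    calc |t| ≤ ‖c₀‖ * ‖tc‖ := h1
    _ ≤ a * (b * euclNorm r) := by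
        apply mul_le_mul_of_nonneg_left h2 (norm_nonneg _)
    _ = a * b * euclNorm r := by ring
  refine ⟨a, b, t, d, norm_nonneg _, Real.sqrt_nonneg _, htb, hd0, hds, hb2, ?_, ?_⟩
  · -- norm identity
    rw [hvp]
    simp only [star_add, star_smul, add_dotProduct, dotProduct_add, smul_dotProduct,
      dotProduct_smul, smul_eq_mul, hxx, hxz, hzx, hzz]
    simp only [mul_zero, zero_mul, add_zero, zero_add, mul_one]
    rw [Complex.star_def, show c₀ * (starRingEnd ℂ) c₀ = (starRingEnd ℂ) c₀ * c₀ from mul_comm _ _,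
      ← Complex.normSq_eq_conj_mul_self]
    rw [Complex.add_re, Complex.ofReal_re, hdsum, ← hb2, Complex.sq_norm]
  · -- quadratic form identity
    rw [hvp]
    simp only [star_add, star_smul, mulVec_add, mulVec_smul, add_dotProduct, dotProduct_add,
      smul_dotProduct, dotProduct_smul, smul_eq_mul]
    rw [← hlamt, h_conj, ht22, ← htc]
    have hre1 : (star c₀ * (c₀ * (lamt:ℂ))).re = lamt * a ^ 2 := by
      have h5 : star c₀ * (c₀ * (lamt:ℂ)) = ((Complex.normSq c₀ * lamt : ℝ) : ℂ) := by
        rw [Complex.star_def]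
        push_cast
        rw [Complex.normSq_eq_conj_mul_self]
        ring
      rw [h5, Complex.ofReal_re, ← Complex.sq_norm]
      ring
    have hre2 : (star c₀ * starRingEnd ℂ tc + c₀ * tc).re = 2 * t := by
      rw [Complex.star_def, ← map_mul (starRingEnd ℂ)]
      rw [Complex.add_re, Complex.conj_re, htdef]
      ring
    rw [show c₀ * (star c₀ * ↑lamt + tc) + (star c₀ * (starRingEnd ℂ) tc
          + star w ⬝ᵥ (X₂ᴴ * A * X₂) *ᵥ w)
        = star c₀ * (c₀ * (lamt:ℂ)) + (star c₀ * starRingEnd ℂ tc + c₀ * tc)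
          + star w ⬝ᵥ (X₂ᴴ * A * X₂) *ᵥ w from by ring]
    rw [Complex.add_re, Complex.add_re, hre1, hre2, hdA]

end RitzAux

namespace RitzAux

lemma g_orthonormal {n : ℕ} (x : Fin (n+1) → ℂ) (hxx : star x ⬝ᵥ x = 1)
    (X₂ : Matrix (Fin (n+1)) (Fin n) ℂ) (hX₂ : X₂ᴴ * X₂ = 1) (hX₂x : X₂ᴴ.mulVec x = 0)
    {ι : Type*} [DecidableEq ι] (u : ι → EuclideanSpace ℂ (Fin n)) (hu : Orthonormal ℂ u) :
    Orthonormal ℂ (Sum.elim (fun _ : Fin 1 => (WithLp.equiv 2 (Fin (n+1) → ℂ)).symm x)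
      (fun j : ι => (WithLp.equiv 2 (Fin (n+1) → ℂ)).symm
        (X₂ *ᵥ WithLp.equiv 2 (Fin n → ℂ) (u j)))) := by
  have hxX : ∀ q : Fin n → ℂ, star x ⬝ᵥ (X₂ *ᵥ q) = 0 := by
    intro q
    rw [dotProduct_mulVec]
    have : star x ᵥ* X₂ = star (X₂ᴴ *ᵥ x) := by
      rw [star_mulVec, conjTranspose_conjTranspose]
    rw [this, hX₂x]
    simp
  have hXx : ∀ q : Fin n → ℂ, star (X₂ *ᵥ q) ⬝ᵥ x = 0 := by
    intro q
    have h := congrArg star (hxX q)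
    rw [star_dotProduct, star_star, star_zero] at h
    exact h
  have hXX : ∀ q q' : Fin n → ℂ, star (X₂ *ᵥ q) ⬝ᵥ (X₂ *ᵥ q') = star q ⬝ᵥ q' := by
    intro q q'
    rw [star_mulVec, ← dotProduct_mulVec, mulVec_mulVec, hX₂, one_mulVec]
  rw [orthonormal_iff_ite]
  have hu' := orthonormal_iff_ite.mp hu
  rintro (i | i) (j | j)
  · have : i = j := Subsingleton.elim i j
    subst this
    simp only [Sum.elim_inl, inner_piLp_equiv_symm, hxx]
    simp
  · simp only [Sum.elim_inl, Sum.elim_inr, inner_piLp_equiv_symm, hxX]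
    simp
  · simp only [Sum.elim_inl, Sum.elim_inr, inner_piLp_equiv_symm, hXx]
    simp
  · simp only [Sum.elim_inr, inner_piLp_equiv_symm, hXX]
    have h2 : star (WithLp.equiv 2 (Fin n → ℂ) (u i)) ⬝ᵥ WithLp.equiv 2 (Fin n → ℂ) (u j)
        = inner ℂ (u i) (u j) := by rw [EuclideanSpace.inner_eq_star_dotProduct, dotProduct_comm]; rfl
    rw [h2, hu' i j]
    by_cases hij : i = j <;> simp [hij]

lemma exists_common {m : ℕ} (S W : Submodule ℂ (EuclideanSpace ℂ (Fin m)))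
    (h : m < Module.finrank ℂ S + Module.finrank ℂ W) : ∃ v, v ≠ 0 ∧ v ∈ S ⊓ W := by
  have h1 := Submodule.finrank_sup_add_finrank_inf_eq S W
  have h2 : Module.finrank ℂ ↥(S ⊔ W) ≤ m := by
    have := Submodule.finrank_le (S ⊔ W)
    rwa [finrank_euclideanSpace_fin] at this
  have h3 : 0 < Module.finrank ℂ ↥(S ⊓ W) := by omega
  have h4 : S ⊓ W ≠ ⊥ := by
    intro hbot
    rw [hbot, finrank_bot] at h3
    exact lt_irrefl 0 h3
  obtain ⟨v, hv, hv0⟩ := (Submodule.ne_bot_iff _).mp h4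
  exact ⟨v, hv0, hv⟩

end RitzAux

set_option maxHeartbeats 2000000 in
/-- **Residual bound for a Ritz value.** Let `A` be Hermitian of size `n+1 ≥ 2`,
`x` a unit vector with Rayleigh quotient `lamt = xᴴ A x` and residual
`r = A x − lamt x`. Let `X₂` have orthonormal columns spanning `x^⊥`, let
`Ĥ = X₂ᴴ A X₂` with `η̂` the distance from `lamt` to the spectrum of `Ĥ`, let
`lam` be the eigenvalues of `A` in decreasing order, and let `e` sort the merged
multiset `{lamt} ∪ spec Ĥ` decreasingly, `k = e.symm (inl 0)` being the position
of `lamt` therein. Then `|lam k − lamt| ≤ 2‖r‖²/(η̂ + √(η̂² + 4‖r‖²))`. -/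
theorem ritz_value_residual_bound {n : ℕ} (hn : 1 ≤ n)
    (A : Matrix (Fin (n + 1)) (Fin (n + 1)) ℂ) (hA : A.IsHermitian)
    (x : Fin (n + 1) → ℂ) (hx : euclNorm x = 1)
    (lamt : ℝ) (hlamt : (lamt : ℂ) = star x ⬝ᵥ A.mulVec x)
    (X₂ : Matrix (Fin (n + 1)) (Fin n) ℂ)
    (hX₂ : X₂ᴴ * X₂ = 1) (hX₂x : X₂ᴴ.mulVec x = 0)
    (hH : (X₂ᴴ * A * X₂).IsHermitian)
    (lam : Fin (n + 1) → ℝ) (hlam_anti : Antitone lam)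
    (hlam_eig : ∃ p : Equiv.Perm (Fin (n + 1)), lam = hA.eigenvalues ∘ p)
    (e : Fin (n + 1) ≃ (Fin 1 ⊕ Fin n))
    (he : Antitone fun i => Sum.elim (fun _ => lamt) hH.eigenvalues (e i)) :
    |lam (e.symm (Sum.inl 0)) - lamt| ≤
      2 * euclNorm (A.mulVec x - (lamt : ℂ) • x) ^ 2 /
        ((⨅ j, |lamt - hH.eigenvalues j|) +
          Real.sqrt ((⨅ j, |lamt - hH.eigenvalues j|) ^ 2 +
            4 * euclNorm (A.mulVec x - (lamt : ℂ) • x) ^ 2)) := by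
  classical
  obtain ⟨p, hp⟩ := hlam_eig
  set k : Fin (n + 1) := e.symm (Sum.inl 0) with hk
  set R : ℝ := euclNorm (A.mulVec x - (lamt : ℂ) • x) with hR
  set η : ℝ := ⨅ j, |lamt - hH.eigenvalues j| with hη
  set δ : ℝ := 2 * R ^ 2 / (η + Real.sqrt (η ^ 2 + 4 * R ^ 2)) with hδ
  have hRnn : 0 ≤ R := by rw [hR]; exact norm_nonneg _
  have hne : Nonempty (Fin n) := ⟨⟨0, hn⟩⟩
  have hηnn : 0 ≤ η := Real.iInf_nonneg fun j => abs_nonneg _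
  have hηle : ∀ j, η ≤ |lamt - hH.eigenvalues j| := fun j =>
    ciInf_le (Set.Finite.bddBelow (Set.finite_range _)) j
  have hδnn : 0 ≤ δ := by
    rw [hδ]
    positivity
  have hxx : star x ⬝ᵥ x = 1 := by
    have h : star x ⬝ᵥ x = ((‖(WithLp.equiv 2 (Fin (n+1) → ℂ)).symm x‖ : ℂ)) ^ 2 := by
      rw [← RitzAux.inner_piLp_equiv_symm]
      exact inner_self_eq_norm_sq_to_K _
    have hx1 : ‖(WithLp.equiv 2 (Fin (n+1) → ℂ)).symm x‖ = 1 := hx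
    rw [h, hx1]
    norm_num
  have hkn : (k : ℕ) ≤ n := Nat.lt_succ_iff.mp k.isLt
  have hek : e k = Sum.inl 0 := e.apply_symm_apply _
  have hinr : ∀ i : Fin (n+1), i ≠ k → ∃ j : Fin n, e i = Sum.inr j := by
    intro i hik
    rcases hei : e i with z | j
    · exfalso
      apply hik
      apply e.injective
      rw [hei, Subsingleton.elim z 0, hek]
    · exact ⟨j, rfl⟩
  set f : Fin (n+1) → Fin n := fun i => Sum.elim (fun _ => (⟨0, hn⟩ : Fin n)) id (e i) with hf
  have hfspec : ∀ i : Fin (n+1), i ≠ k → e i = Sum.inr (f i) := by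
    intro i hik
    obtain ⟨j, hj⟩ := hinr i hik
    rw [hf]
    simp only [hj, Sum.elim_inr, id]
  set sH : Finset (Fin n) := Finset.univ.filter (fun j => hH.eigenvalues j ≤ lamt) with hsH
  set sH' : Finset (Fin n) := Finset.univ.filter (fun j => lamt ≤ hH.eigenvalues j) with hsH'
  set sA : Finset (Fin (n+1)) := Finset.univ.filter (fun i => lam k ≤ hA.eigenvalues i) with hsA
  set sA' : Finset (Fin (n+1)) := Finset.univ.filter (fun i => hA.eigenvalues i ≤ lam k) with hsA'
  have hcardH : n - (k : ℕ) ≤ sH.card := by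
    have h1 : ∀ i ∈ Finset.Ioi k, f i ∈ sH := by
      intro i hi
      rw [Finset.mem_Ioi] at hi
      have hik : i ≠ k := ne_of_gt hi
      have h2 : Sum.elim (fun _ => lamt) hH.eigenvalues (e i)
          ≤ Sum.elim (fun _ => lamt) hH.eigenvalues (e k) := he (le_of_lt hi)
      rw [hfspec i hik, hek] at h2
      simp only [Sum.elim_inr, Sum.elim_inl] at h2
      simp only [hsH, Finset.mem_filter, Finset.mem_univ, true_and]
      exact h2
    have h3 : Set.InjOn f (Finset.Ioi k) := by
      intro i hi i' hi' hff
      rw [Finset.coe_Ioi, Set.mem_Ioi] at hi hi'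
      apply e.injective
      rw [hfspec i (ne_of_gt hi), hfspec i' (ne_of_gt hi'), hff]
    have h4 := Finset.card_le_card_of_injOn f h1 h3
    rw [Fin.card_Ioi] at h4
    omega
  have hcardH' : (k : ℕ) ≤ sH'.card := by
    have h1 : ∀ i ∈ Finset.Iio k, f i ∈ sH' := by
      intro i hi
      rw [Finset.mem_Iio] at hi
      have hik : i ≠ k := ne_of_lt hi
      have h2 : Sum.elim (fun _ => lamt) hH.eigenvalues (e k)
          ≤ Sum.elim (fun _ => lamt) hH.eigenvalues (e i) := he (le_of_lt hi)
      rw [hfspec i hik, hek] at h2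
      simp only [Sum.elim_inr, Sum.elim_inl] at h2
      simp only [hsH', Finset.mem_filter, Finset.mem_univ, true_and]
      exact h2
    have h3 : Set.InjOn f (Finset.Iio k) := by
      intro i hi i' hi' hff
      rw [Finset.coe_Iio, Set.mem_Iio] at hi hi'
      apply e.injective
      rw [hfspec i (ne_of_lt hi), hfspec i' (ne_of_lt hi'), hff]
    have h4 := Finset.card_le_card_of_injOn f h1 h3
    rw [Fin.card_Iio] at h4
    omega
  have hcardA : (k : ℕ) + 1 ≤ sA.card := by
    have h1 : ∀ a ∈ Finset.Iic k, p a ∈ sA := by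
      intro a ha
      rw [Finset.mem_Iic] at ha
      have h2 : lam k ≤ lam a := hlam_anti ha
      have h3 : lam a = hA.eigenvalues (p a) := by rw [hp]; rfl
      simp only [hsA, Finset.mem_filter, Finset.mem_univ, true_and]
      rw [← h3]
      exact h2
    have h4 := Finset.card_le_card_of_injOn p h1 (p.injective.injOn)
    rw [Fin.card_Iic] at h4
    omega
  have hcardA' : (n + 1) - (k : ℕ) ≤ sA'.card := by
    have h1 : ∀ a ∈ Finset.Ici k, p a ∈ sA' := by
      intro a ha
      rw [Finset.mem_Ici] at ha
      have h2 : lam a ≤ lam k := hlam_anti ha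
      have h3 : lam a = hA.eigenvalues (p a) := by rw [hp]; rfl
      simp only [hsA', Finset.mem_filter, Finset.mem_univ, true_and]
      rw [← h3]
      exact h2
    have h4 := Finset.card_le_card_of_injOn p h1 (p.injective.injOn)
    rw [Fin.card_Ici] at h4
    omega
  -- upper bound
  have hub : lam k ≤ lamt + δ := by
    set SS : Submodule ℂ (EuclideanSpace ℂ (Fin (n+1))) := Submodule.span ℂ (Set.range (Sum.elim
        (fun _ : Fin 1 => (WithLp.equiv 2 (Fin (n+1) → ℂ)).symm x)
        (fun j : ↥sH => (WithLp.equiv 2 (Fin (n+1) → ℂ)).symm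
          (X₂ *ᵥ WithLp.equiv 2 (Fin n → ℂ) (hH.eigenvectorBasis (j : Fin n)))))) with hSS
    set WW : Submodule ℂ (EuclideanSpace ℂ (Fin (n+1))) := Submodule.span ℂ (Set.range
        (fun i : ↥sA => hA.eigenvectorBasis (i : Fin (n+1)))) with hWW
    have hfrS : Module.finrank ℂ SS = 1 + sH.card := by
      rw [hSS, finrank_span_eq_card ((RitzAux.g_orthonormal x hxx X₂ hX₂ hX₂x
        (fun j : ↥sH => hH.eigenvectorBasis (j : Fin n))
        (hH.eigenvectorBasis.orthonormal.comp Subtype.val Subtype.val_injective)).linearIndependent)]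
      simp
    have hfrW : Module.finrank ℂ WW = sA.card := by
      rw [hWW]
      have h := finrank_span_eq_card (R := ℂ)
        ((hA.eigenvectorBasis.orthonormal.comp ((↑) : ↥sA → Fin (n+1))
          Subtype.val_injective).linearIndependent)
      rw [Fintype.card_coe] at h
      exact h
    obtain ⟨v, hv0, hvSW⟩ := RitzAux.exists_common SS WW (by rw [hfrS, hfrW]; omega)
    obtain ⟨hvS, hvW⟩ := hvSW
    obtain ⟨a, b, t, d, ha0, hb0, htb, hd0, hds, hb2, hNv, hQv⟩ :=
      RitzAux.aux_decomp hA x hxx lamt hlamt X₂ hX₂ hX₂x hH sH v hvS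
    obtain ⟨dA, hdA0, hdAs, hdAsum, hdAq⟩ := RitzAux.aux_eigspan hA sA v hvW
    have hNvpos : 0 < a ^ 2 + b ^ 2 := by
      rw [← hNv]
      have h5 := RitzAux.dot_self_re (WithLp.equiv 2 (Fin (n+1) → ℂ) v)
      rw [Equiv.symm_apply_apply] at h5
      rw [h5]
      have h6 : 0 < ‖v‖ := norm_pos_iff.mpr hv0
      positivity
    have hQlow : lam k * (a ^ 2 + b ^ 2) ≤
        (star (WithLp.equiv 2 _ v) ⬝ᵥ (A *ᵥ WithLp.equiv 2 _ v)).re := by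
      rw [hdAq]
      have h6 : a ^ 2 + b ^ 2 = ∑ i, dA i := by rw [← hNv, hdAsum]
      rw [h6, Finset.mul_sum]
      refine Finset.sum_le_sum fun i _ => ?_
      by_cases hi : i ∈ sA
      · exact mul_le_mul_of_nonneg_right (Finset.mem_filter.mp hi).2 (hdA0 i)
      · rw [hdAs i hi]; simp
    have hμb : ∀ j ∈ sH, hH.eigenvalues j ≤ lamt - η := by
      intro j hj
      have h7 := (Finset.mem_filter.mp hj).2
      have h8 := hηle j
      rw [abs_of_nonneg (by linarith)] at h8
      linarith
    have hQhigh : (star (WithLp.equiv 2 _ v) ⬝ᵥ (A *ᵥ WithLp.equiv 2 _ v)).re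
        ≤ (lamt + δ) * (a ^ 2 + b ^ 2) := by
      rw [hQv]
      have h9 : ∑ j, hH.eigenvalues j * d j ≤ (lamt - η) * b ^ 2 := by
        rw [hb2, Finset.mul_sum]
        refine Finset.sum_le_sum fun j _ => ?_
        by_cases hj : j ∈ sH
        · exact mul_le_mul_of_nonneg_right (hμb j hj) (hd0 j)
        · rw [hds j hj]; simp
      have h10 : 2 * t ≤ 2 * (a * b * R) := by
        have h10a := le_abs_self t
        linarith [htb]
      have h11 := RitzAux.scalar_key R η hRnn hηnn a b ha0 hb0
      rw [← hδ] at h11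
      nlinarith [h9, h10, h11]
    exact le_of_mul_le_mul_right (le_trans hQlow hQhigh) hNvpos
  -- lower bound
  have hlb : lamt - δ ≤ lam k := by
    set SS : Submodule ℂ (EuclideanSpace ℂ (Fin (n+1))) := Submodule.span ℂ (Set.range (Sum.elim
        (fun _ : Fin 1 => (WithLp.equiv 2 (Fin (n+1) → ℂ)).symm x)
        (fun j : ↥sH' => (WithLp.equiv 2 (Fin (n+1) → ℂ)).symm
          (X₂ *ᵥ WithLp.equiv 2 (Fin n → ℂ) (hH.eigenvectorBasis (j : Fin n)))))) with hSS
    set WW : Submodule ℂ (EuclideanSpace ℂ (Fin (n+1))) := Submodule.span ℂ (Set.range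
        (fun i : ↥sA' => hA.eigenvectorBasis (i : Fin (n+1)))) with hWW
    have hfrS : Module.finrank ℂ SS = 1 + sH'.card := by
      rw [hSS, finrank_span_eq_card ((RitzAux.g_orthonormal x hxx X₂ hX₂ hX₂x
        (fun j : ↥sH' => hH.eigenvectorBasis (j : Fin n))
        (hH.eigenvectorBasis.orthonormal.comp Subtype.val Subtype.val_injective)).linearIndependent)]
      simp
    have hfrW : Module.finrank ℂ WW = sA'.card := by
      rw [hWW]
      have h := finrank_span_eq_card (R := ℂ)
        ((hA.eigenvectorBasis.orthonormal.comp ((↑) : ↥sA' → Fin (n+1))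
          Subtype.val_injective).linearIndependent)
      rw [Fintype.card_coe] at h
      exact h
    obtain ⟨v, hv0, hvSW⟩ := RitzAux.exists_common SS WW (by rw [hfrS, hfrW]; omega)
    obtain ⟨hvS, hvW⟩ := hvSW
    obtain ⟨a, b, t, d, ha0, hb0, htb, hd0, hds, hb2, hNv, hQv⟩ :=
      RitzAux.aux_decomp hA x hxx lamt hlamt X₂ hX₂ hX₂x hH sH' v hvS
    obtain ⟨dA, hdA0, hdAs, hdAsum, hdAq⟩ := RitzAux.aux_eigspan hA sA' v hvW
    have hNvpos : 0 < a ^ 2 + b ^ 2 := by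
      rw [← hNv]
      have h5 := RitzAux.dot_self_re (WithLp.equiv 2 (Fin (n+1) → ℂ) v)
      rw [Equiv.symm_apply_apply] at h5
      rw [h5]
      have h6 : 0 < ‖v‖ := norm_pos_iff.mpr hv0
      positivity
    have hQhigh : (star (WithLp.equiv 2 _ v) ⬝ᵥ (A *ᵥ WithLp.equiv 2 _ v)).re
        ≤ lam k * (a ^ 2 + b ^ 2) := by
      rw [hdAq]
      have h6 : a ^ 2 + b ^ 2 = ∑ i, dA i := by rw [← hNv, hdAsum]
      rw [h6, Finset.mul_sum]
      refine Finset.sum_le_sum fun i _ => ?_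
      by_cases hi : i ∈ sA'
      · exact mul_le_mul_of_nonneg_right (Finset.mem_filter.mp hi).2 (hdA0 i)
      · rw [hdAs i hi]; simp
    have hμb : ∀ j ∈ sH', lamt + η ≤ hH.eigenvalues j := by
      intro j hj
      have h7 := (Finset.mem_filter.mp hj).2
      have h8 := hηle j
      rw [abs_of_nonpos (by linarith)] at h8
      linarith
    have hQlow : (lamt - δ) * (a ^ 2 + b ^ 2)
        ≤ (star (WithLp.equiv 2 _ v) ⬝ᵥ (A *ᵥ WithLp.equiv 2 _ v)).re := by
      rw [hQv]
      have h9 : (lamt + η) * b ^ 2 ≤ ∑ j, hH.eigenvalues j * d j := by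
        rw [hb2, Finset.mul_sum]
        refine Finset.sum_le_sum fun j _ => ?_
        by_cases hj : j ∈ sH'
        · exact mul_le_mul_of_nonneg_right (hμb j hj) (hd0 j)
        · rw [hds j hj]; simp
      have h10 : -(2 * (a * b * R)) ≤ 2 * t := by
        have h10a := neg_abs_le t
        linarith [htb]
      have h11 := RitzAux.scalar_key R η hRnn hηnn a b ha0 hb0
      rw [← hδ] at h11
      nlinarith [h9, h10, h11]
    exact le_of_mul_le_mul_right (le_trans hQlow hQhigh) hNvpos
  rw [abs_le]
  constructor <;> linarith
end
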